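/- arXiv:1904.02573 — 2 statements merged into one kernel-verified Lean document; each statement's English description precedes it below -/
import Mathlib

section
/- Let p be a prime, q = p^f, and for n ≥ 1 let U_n = (1+𝔭)/(1+𝔭^n). Then for every k ≥ 1, the p^k-rank of U_n satisfies rk_{p^k}(U_n) = f·(⌊(n−1)/p^{k−1}⌋ − ⌊(n−1)/p^k⌋), where rk_{p^k}(A) := dim_{F_p}(A^{p^{k−1}}/A^{p^k}). -/
open scoped Classical

/-- The ring `F_q[t]/(t^n)` where `q = p^f`. -/
abbrev Rq (p f n : ℕ) [Fact p.Prime] : Type :=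
  Polynomial (GaloisField p f) ⧸
    Ideal.span {(Polynomial.X : Polynomial (GaloisField p f)) ^ n}

/-- The class of `t` in `F_q[t]/(t^n)`. -/
noncomputable def tbar (p f n : ℕ) [Fact p.Prime] : Rq p f n :=
  Ideal.Quotient.mk _ (Polynomial.X : Polynomial (GaloisField p f))

/-- The group of principal units `U_n = (1+𝔭)/(1+𝔭^n)`, realised as the subgroup of
units of `F_q[t]/(t^n)` that are congruent to `1` modulo `t`. -/
noncomputable def Un (p f n : ℕ) [Fact p.Prime] : Subgroup (Rq p f n)ˣ where
  carrier := {u | (u : Rq p f n) - 1 ∈ Ideal.span {tbar p f n}}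
  one_mem' := by simp
  mul_mem' := by
    intro a b ha hb
    simp only [Set.mem_setOf_eq] at ha hb ⊢
    have h : ((a * b : (Rq p f n)ˣ) : Rq p f n) - 1
        = (a : Rq p f n) * ((b : Rq p f n) - 1) + ((a : Rq p f n) - 1) := by
      push_cast; ring
    rw [h]
    exact Ideal.add_mem _ (Ideal.mul_mem_left _ _ hb) ha
  inv_mem' := by
    intro a ha
    have h1 : ((a⁻¹ : (Rq p f n)ˣ) : Rq p f n) * (a : Rq p f n) = 1 := by
      rw [← Units.val_mul, inv_mul_cancel a, Units.val_one]
    have key : ((a⁻¹ : (Rq p f n)ˣ) : Rq p f n) - 1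
        = -(((a⁻¹ : (Rq p f n)ˣ) : Rq p f n) * ((a : Rq p f n) - 1)) := by
      linear_combination h1
    rw [Set.mem_setOf_eq, key]
    exact neg_mem (Ideal.mul_mem_left _ _ ha)

/-- The `ℓ^k`-rank of a finite abelian group `A`, i.e. the `F_ℓ`-dimension of
`A^{ℓ^{k-1}}/A^{ℓ^k}` (encoded as `log_ℓ` of the cardinality of that elementary
abelian quotient). -/
noncomputable def pkRank (A : Type*) [CommGroup A] (ℓ k : ℕ) : ℕ :=
  Nat.log ℓ (Nat.card
    ((powMonoidHom (ℓ ^ (k - 1)) : A →* A).range ⧸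
      ((powMonoidHom (ℓ ^ k) : A →* A).range.subgroupOf
        (powMonoidHom (ℓ ^ (k - 1)) : A →* A).range)))

/-- `α_G(A)`: the number of subgroups of `A` isomorphic to `G`. -/
noncomputable def numIsoSubgroups (G A : Type*) [Group G] [Group A] : ℕ :=
  Nat.card {H : Subgroup A // Nonempty (H ≃* G)}

/-- `|Inj(G,A)|`: the number of injective group homomorphisms `G → A`. -/
noncomputable def numInj (G A : Type*) [Group G] [Group A] : ℕ :=
  Nat.card {φ : G →* A // Function.Injective φ}

/-- The `ℓ`-Sylow subgroup (`ℓ`-primary component) of an abelian group. -/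
noncomputable def primaryPart (G : Type*) [CommGroup G] (ℓ : ℕ) (hℓ : ℓ.Prime) : Subgroup G :=
  @CommGroup.primaryComponent G _ ℓ

/-- The subgroup of elements of order coprime to `p`. -/
def coprimePart (G : Type*) [CommGroup G] (p : ℕ) : Subgroup G where
  carrier := {g | Nat.Coprime (orderOf g) p}
  one_mem' := by simp [Nat.Coprime]
  mul_mem' := by
    intro a b ha hb
    exact Nat.Coprime.coprime_dvd_left ((Commute.all a b).orderOf_mul_dvd_mul_orderOf)
      (Nat.Coprime.mul ha hb)
  inv_mem' := by
    intro a ha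
    simpa [orderOf_inv] using ha

/-- `δ(n,k) = {n/p^k} - {n/p^{k-1}}`. -/
noncomputable def deltaNK (p : ℕ) (n : ℤ) (k : ℕ) : ℝ :=
  Int.fract ((n : ℝ) / (p : ℝ) ^ k) - Int.fract ((n : ℝ) / (p : ℝ) ^ (k - 1))

/-- `α_p(G) = Σ_{k=1}^e (p-1)/p^k · r_k(G)`. -/
noncomputable def alphaP (p e : ℕ) (G : Type*) [CommGroup G] : ℝ :=
  ∑ k ∈ Finset.Icc 1 e, ((p : ℝ) - 1) / (p : ℝ) ^ k * (pkRank G p k : ℝ)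

/-- `δ_G(n) = -α_p(G) + Σ_{k=1}^e r_k(G)·δ(n-1,k)`. -/
noncomputable def deltaG (p e : ℕ) (G : Type*) [CommGroup G] (n : ℤ) : ℝ :=
  -alphaP p e G + ∑ k ∈ Finset.Icc 1 e, (pkRank G p k : ℝ) * deltaNK p (n - 1) k

/-- `ε(G,q,n)` with `q = p^f`. -/
noncomputable def epsilonGQN (p e f : ℕ) (G : Type*) [CommGroup G] (n : ℕ) : ℝ :=
  ∏ k ∈ Finset.Icc 1 e, ∏ j ∈ Finset.range (pkRank G p k - pkRank G p (k + 1)),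
    (1 - (p : ℝ) ^ ((pkRank G p (k + 1) : ℤ) + j - 1) /
      ((p : ℝ) ^ f) ^ (((p : ℝ) - 1) * ((n : ℝ) - 1) / (p : ℝ) ^ k + deltaNK p ((n : ℤ) - 1) k))
namespace Stmt1Aux

open Polynomial

variable (p f n : ℕ) [Fact p.Prime]

/-- The polynomial with coefficients `c : Fin n → K`. -/
noncomputable def Pc (c : Fin n → GaloisField p f) : Polynomial (GaloisField p f) :=
  ∑ i : Fin n, Polynomial.C (c i) * Polynomial.X ^ (i : ℕ)

lemma coeff_Pc (c : Fin n → GaloisField p f) (j : ℕ) :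
    (Pc p f n c).coeff j = if h : j < n then c ⟨j, h⟩ else 0 := by
  rw [Pc, Polynomial.finset_sum_coeff]
  simp_rw [Polynomial.coeff_C_mul, Polynomial.coeff_X_pow, mul_ite, mul_one, mul_zero]
  by_cases h : j < n
  · rw [dif_pos h, Finset.sum_eq_single (⟨j, h⟩ : Fin n)]
    · rw [if_pos rfl]
    · intro b _ hb
      exact if_neg (fun hjb => hb (Fin.ext hjb.symm))
    · intro h'; exact absurd (Finset.mem_univ _) h'
  · rw [dif_neg h, Finset.sum_eq_zero]
    intro i _
    exact if_neg (fun hji => h (by rw [hji]; exact i.2))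

lemma card_S (hf : 1 ≤ f) (hn : 1 ≤ n) (m : ℕ) :
    Nat.card {x : Rq p f n // x ∈ Ideal.span {tbar p f n} ∧ x ^ p ^ m = 0}
      = (p ^ f) ^ ((n - 1) - (n - 1) / p ^ m) := by
  have hp : p.Prime := Fact.out
  have hppos : 0 < p ^ m := pow_pos hp.pos m
  set D : ℕ := (n - 1) / p ^ m with hD
  have hDle : D ≤ n - 1 := Nat.div_le_self _ _
  have cond_iff : ∀ i : ℕ, i * p ^ m < n ↔ i ≤ D := by
    intro i
    rw [hD, Nat.le_div_iff_mul_le hppos]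
    omega
  have pow_coeff : ∀ (r : Polynomial (GaloisField p f)) (i : ℕ),
      (r ^ p ^ m).coeff (i * p ^ m) = 0 ↔ r.coeff i = 0 := by
    intro r i
    rw [← Polynomial.map_iterateFrobenius_expand p, Polynomial.coeff_map,
      Polynomial.coeff_expand hppos, if_pos ⟨i, mul_comm i (p ^ m)⟩,
      Nat.mul_div_cancel i hppos]
    constructor
    · intro h
      exact (iterateFrobenius (GaloisField p f) p m).injective (by rw [h, map_zero])
    · intro h; rw [h, map_zero]
  have hXn_mem : (Polynomial.X : Polynomial (GaloisField p f)) ^ n ∈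
      Ideal.span {(Polynomial.X : Polynomial (GaloisField p f))} :=
    Ideal.mem_span_singleton.2 (dvd_pow_self _ (by omega))
  have span_tbar : Ideal.span {tbar p f n}
      = Ideal.map (Ideal.Quotient.mk (Ideal.span {(Polynomial.X : Polynomial (GaloisField p f)) ^ n}))
        (Ideal.span {(Polynomial.X : Polynomial (GaloisField p f))}) := by
    rw [Ideal.map_span, Set.image_singleton]; rfl
  have mem_J_iff : ∀ r : Polynomial (GaloisField p f),
      Ideal.Quotient.mk (Ideal.span {(Polynomial.X : Polynomial (GaloisField p f)) ^ n}) r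
        ∈ Ideal.span {tbar p f n} ↔ r.coeff 0 = 0 := by
    intro r
    rw [span_tbar, Ideal.mem_quotient_iff_mem
      (by rw [Ideal.span_le]; intro x hx; rw [Set.mem_singleton_iff] at hx; exact hx ▸ hXn_mem),
      Ideal.mem_span_singleton, Polynomial.X_dvd_iff]
  have mk_pow_zero_iff : ∀ r : Polynomial (GaloisField p f),
      (Ideal.Quotient.mk (Ideal.span {(Polynomial.X : Polynomial (GaloisField p f)) ^ n}) r) ^ p ^ m = 0
        ↔ ∀ i : ℕ, i ≤ D → r.coeff i = 0 := by
    intro r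
    rw [← map_pow, Ideal.Quotient.eq_zero_iff_mem, Ideal.mem_span_singleton,
      Polynomial.X_pow_dvd_iff]
    constructor
    · intro h i hi
      exact (pow_coeff r i).1 (h _ ((cond_iff i).2 hi))
    · intro h d hd
      by_cases hdvd : p ^ m ∣ d
      · obtain ⟨i, rfl⟩ := hdvd
        rw [mul_comm (p ^ m) i] at hd ⊢
        exact (pow_coeff r i).2 (h i ((cond_iff i).1 hd))
      · rw [← Polynomial.map_iterateFrobenius_expand p, Polynomial.coeff_map,
          Polynomial.coeff_expand hppos, if_neg hdvd, map_zero]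
  let T := {c : Fin n → GaloisField p f // ∀ i : Fin n, (i : ℕ) ≤ D → c i = 0}
  let Φ : T → {x : Rq p f n // x ∈ Ideal.span {tbar p f n} ∧ x ^ p ^ m = 0} := fun c =>
    ⟨Ideal.Quotient.mk _ (Pc p f n c.1),
     by rw [mem_J_iff, coeff_Pc, dif_pos (by omega : 0 < n)]
        exact c.2 _ (Nat.zero_le D),
     by rw [mk_pow_zero_iff]
        intro i hi
        rw [coeff_Pc]
        split
        · next h => exact c.2 ⟨i, h⟩ hi
        · rfl⟩
  have hbij : Function.Bijective Φ := by
    constructor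
    · rintro ⟨c, hc⟩ ⟨c', hc'⟩ h
      have h1 : Ideal.Quotient.mk (Ideal.span {(Polynomial.X : Polynomial (GaloisField p f)) ^ n})
          (Pc p f n c) = Ideal.Quotient.mk _ (Pc p f n c') := congrArg Subtype.val h
      have h2 := Ideal.Quotient.eq.1 h1
      rw [Ideal.mem_span_singleton] at h2
      have h3 := Polynomial.X_pow_dvd_iff.1 h2
      refine Subtype.ext (funext fun i => ?_)
      have h4 := h3 (i : ℕ) i.2
      rw [Polynomial.coeff_sub, coeff_Pc, coeff_Pc, dif_pos i.2] at h4
      have : c i - c' i = 0 := by simpa using h4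
      exact sub_eq_zero.1 this
    · rintro ⟨x, hxJ, hxp⟩
      obtain ⟨g, rfl⟩ := Ideal.Quotient.mk_surjective x
      have hmonic : (Polynomial.X ^ n : Polynomial (GaloisField p f)).Monic :=
        Polynomial.monic_X_pow n
      set r := g %ₘ (Polynomial.X ^ n) with hr
      have hmk : Ideal.Quotient.mk (Ideal.span {(Polynomial.X : Polynomial (GaloisField p f)) ^ n}) r
          = Ideal.Quotient.mk _ g := by
        rw [Ideal.Quotient.eq]
        have : r - g = -(Polynomial.X ^ n * (g /ₘ Polynomial.X ^ n)) := by
          rw [hr, Polynomial.modByMonic_eq_sub_mul_div _ _]; ring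
        rw [this]
        exact neg_mem (Ideal.mem_span_singleton.2 (dvd_mul_right _ _))
      have hdeg : r.degree < (n : ℕ) := by
        simpa [Polynomial.degree_X_pow] using Polynomial.degree_modByMonic_lt g hmonic
      have hcoeffs : ∀ i : ℕ, i ≤ D → r.coeff i = 0 := by
        rw [← hmk] at hxp
        exact (mk_pow_zero_iff r).1 hxp
      refine ⟨⟨fun i : Fin n => r.coeff i, fun i hi => hcoeffs i hi⟩, Subtype.ext ?_⟩
      show Ideal.Quotient.mk _ (Pc p f n _) = _
      have hPc : Pc p f n (fun i : Fin n => r.coeff i) = r := by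
        apply Polynomial.ext
        intro d
        rw [coeff_Pc]
        split
        · rfl
        · next hdn =>
          exact (Polynomial.coeff_eq_zero_of_degree_lt
            (lt_of_lt_of_le hdeg (Nat.cast_le.2 (by omega)))).symm
      rw [hPc, hmk]
  rw [← Nat.card_eq_of_bijective Φ hbij]
  have e1 : T ≃ ({i : Fin n // ¬ ((i : ℕ) ≤ D)} → GaloisField p f) :=
    { toFun := fun c i => c.1 i.1
      invFun := fun g => ⟨fun i => if h : (i : ℕ) ≤ D then 0 else g ⟨i, h⟩,
        fun i hi => dif_pos hi⟩
      left_inv := fun c => Subtype.ext (funext fun i => by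
        dsimp only
        split
        · next h => exact (c.2 i h).symm
        · rfl)
      right_inv := fun g => funext fun i => by dsimp only; rw [dif_neg i.2] }
  have e2 : {i : Fin n // ¬ ((i : ℕ) ≤ D)} ≃ Fin (n - (D + 1)) :=
    { toFun := fun i => ⟨((i.1 : ℕ)) - (D + 1), by
        have h1 := i.1.2; have h2 := i.2; omega⟩
      invFun := fun j => ⟨⟨(j : ℕ) + (D + 1), by have := j.2; omega⟩, by
        simp only [not_le]; omega⟩
      left_inv := fun i => Subtype.ext (Fin.ext (by
        have h2 := i.2
        simp only [not_le] at h2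
        show ((i.1 : ℕ) - (D + 1)) + (D + 1) = (i.1 : ℕ)
        omega))
      right_inv := fun j => Fin.ext (by
        show ((j : ℕ) + (D + 1)) - (D + 1) = (j : ℕ)
        omega) }
  have hKfin : Nat.card (Fin (n - (D + 1))) = n - (D + 1) := by
    simp [Nat.card_eq_fintype_card]
  rw [Nat.card_congr e1, Nat.card_fun, Nat.card_congr e2, hKfin,
    GaloisField.card p f (by omega)]
  congr 1
  omega

lemma charP_Rq (hn : 1 ≤ n) : CharP (Rq p f n) p := by
  apply CharP.quotient'
  intro x hx
  rw [Ideal.mem_span_singleton] at hx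
  have h0 : ((x : Polynomial (GaloisField p f))).coeff 0 = 0 :=
    Polynomial.X_pow_dvd_iff.1 hx 0 (by omega)
  rw [← Polynomial.C_eq_natCast] at h0 ⊢
  rw [Polynomial.coeff_C_zero] at h0
  rw [h0, map_zero]

lemma pow_n_eq_zero (hn : 1 ≤ n) {x : Rq p f n} (hx : x ∈ Ideal.span {tbar p f n}) :
    x ^ n = 0 := by
  rw [Ideal.mem_span_singleton] at hx
  obtain ⟨y, rfl⟩ := hx
  have htb : tbar p f n ^ n = 0 := by
    rw [tbar, ← map_pow, Ideal.Quotient.eq_zero_iff_mem]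
    exact Ideal.subset_span rfl
  rw [mul_pow, htb, zero_mul]

lemma card_ker (hf : 1 ≤ f) (hn : 1 ≤ n) (m : ℕ) :
    Nat.card ((powMonoidHom (p ^ m) (α := ↥(Un p f n))).ker)
      = (p ^ f) ^ ((n - 1) - (n - 1) / p ^ m) := by
  haveI : CharP (Rq p f n) p := charP_Rq p f n hn
  have freshman : ∀ x : Rq p f n, (1 + x) ^ p ^ m = 1 + x ^ p ^ m := by
    intro x; rw [add_pow_char_pow, one_pow]
  rw [← card_S p f n hf hn m]
  have key : ∀ u : ↥(Un p f n), u ∈ (powMonoidHom (p ^ m) (α := ↥(Un p f n))).ker ↔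
      (((u : (Rq p f n)ˣ) : Rq p f n) - 1) ^ p ^ m = 0 := by
    intro u
    rw [MonoidHom.mem_ker]
    have h2 : (1 : Rq p f n) + (((u : (Rq p f n)ˣ) : Rq p f n) - 1)
        = ((u : (Rq p f n)ˣ) : Rq p f n) := by ring
    constructor
    · intro h
      have h1 : (u : ↥(Un p f n)) ^ p ^ m = 1 := h
      have h3 : ((u : (Rq p f n)ˣ) : Rq p f n) ^ p ^ m = 1 := by
        have := congrArg (fun z : ↥(Un p f n) => ((z : (Rq p f n)ˣ) : Rq p f n)) h1
        simpa using this
      have h4 := freshman (((u : (Rq p f n)ˣ) : Rq p f n) - 1)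
      rw [h2, h3] at h4
      have := h4.symm
      rwa [add_eq_left] at this
    · intro h
      show u ^ p ^ m = 1
      refine Subtype.ext (Units.ext ?_)
      rw [SubmonoidClass.coe_pow, Units.val_pow_eq_pow_val, ← h2, freshman, h,
        add_zero, OneMemClass.coe_one, Units.val_one]
  let ψ : ((powMonoidHom (p ^ m) (α := ↥(Un p f n))).ker) →
      {x : Rq p f n // x ∈ Ideal.span {tbar p f n} ∧ x ^ p ^ m = 0} := fun u =>
    ⟨((u.1 : (Rq p f n)ˣ) : Rq p f n) - 1, u.1.2, (key u.1).1 u.2⟩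
  apply Nat.card_eq_of_bijective ψ
  constructor
  · rintro ⟨u, hu⟩ ⟨v, hv⟩ h
    have h1 : ((u : (Rq p f n)ˣ) : Rq p f n) - 1 = ((v : (Rq p f n)ˣ) : Rq p f n) - 1 :=
      congrArg Subtype.val h
    exact Subtype.ext (Subtype.ext (Units.ext (sub_left_inj.mp h1)))
  · rintro ⟨x, hxJ, hxp⟩
    have hnil : IsNilpotent x := ⟨p ^ m, hxp⟩
    have hu : IsUnit (1 + x) := hnil.isUnit_one_add
    have hval : (hu.unit : Rq p f n) = 1 + x := hu.unit_spec
    have hmem : hu.unit ∈ Un p f n := by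
      show (hu.unit : Rq p f n) - 1 ∈ Ideal.span {tbar p f n}
      rw [hval]
      simpa using hxJ
    have hker : (⟨hu.unit, hmem⟩ : ↥(Un p f n)) ∈
        (powMonoidHom (p ^ m) (α := ↥(Un p f n))).ker := by
      rw [key]
      show ((hu.unit : Rq p f n) - 1) ^ p ^ m = 0
      rw [hval, add_sub_cancel_left, hxp]
    refine ⟨⟨⟨hu.unit, hmem⟩, hker⟩, Subtype.ext ?_⟩
    show (hu.unit : Rq p f n) - 1 = x
    rw [hval]; ring

lemma card_Un (hf : 1 ≤ f) (hn : 1 ≤ n) :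
    Nat.card ↥(Un p f n) = (p ^ f) ^ (n - 1) := by
  have hp : p.Prime := Fact.out
  haveI : CharP (Rq p f n) p := charP_Rq p f n hn
  have h1 : (powMonoidHom (p ^ n) (α := ↥(Un p f n))).ker = ⊤ := by
    rw [eq_top_iff]
    intro u _
    rw [MonoidHom.mem_ker]
    show u ^ p ^ n = 1
    have hx : ((u : (Rq p f n)ˣ) : Rq p f n) - 1 ∈ Ideal.span {tbar p f n} := u.2
    have hxn := pow_n_eq_zero p f n hn hx
    have hle : n ≤ p ^ n := (Nat.lt_pow_self (n := n) hp.one_lt).le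
    have hxpn : (((u : (Rq p f n)ˣ) : Rq p f n) - 1) ^ p ^ n = 0 := by
      rw [← Nat.sub_add_cancel hle, pow_add, hxn, mul_zero]
    have h2 : (1 : Rq p f n) + (((u : (Rq p f n)ˣ) : Rq p f n) - 1)
        = ((u : (Rq p f n)ˣ) : Rq p f n) := by ring
    refine Subtype.ext (Units.ext ?_)
    rw [SubmonoidClass.coe_pow, Units.val_pow_eq_pow_val, ← h2, add_pow_char_pow, one_pow,
      hxpn, add_zero, OneMemClass.coe_one, Units.val_one]
  have h2 := card_ker p f n hf hn n
  rw [h1, Subgroup.card_top] at h2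
  have h3 : (n - 1) / p ^ n = 0 :=
    Nat.div_eq_of_lt (by have := Nat.lt_pow_self (n := n) hp.one_lt; omega)
  rw [h2, h3, Nat.sub_zero]

lemma card_range (hf : 1 ≤ f) (hn : 1 ≤ n) (m : ℕ) :
    Nat.card ((powMonoidHom (p ^ m) (α := ↥(Un p f n))).range)
      = (p ^ f) ^ ((n - 1) / p ^ m) := by
  have hp : p.Prime := Fact.out
  have hcard := Subgroup.card_eq_card_quotient_mul_card_subgroup
      ((powMonoidHom (p ^ m) (α := ↥(Un p f n))).ker)
  have hq : Nat.card (↥(Un p f n) ⧸ (powMonoidHom (p ^ m) (α := ↥(Un p f n))).ker)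
      = Nat.card ((powMonoidHom (p ^ m) (α := ↥(Un p f n))).range) :=
    Nat.card_congr (QuotientGroup.quotientKerEquivRange _).toEquiv
  rw [card_Un p f n hf hn, card_ker p f n hf hn m, hq] at hcard
  have hle : (n - 1) / p ^ m ≤ n - 1 := Nat.div_le_self _ _
  have hpos : 0 < (p ^ f) ^ ((n - 1) - (n - 1) / p ^ m) := pow_pos (pow_pos hp.pos f) _
  apply Nat.eq_of_mul_eq_mul_right hpos
  rw [← hcard, ← pow_add]
  congr 1
  omega

end Stmt1Aux


/-- `rk_{p^k}(U_n) = f·(⌊(n−1)/p^{k−1}⌋ − ⌊(n−1)/p^k⌋)`. -/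
theorem stmt_1 (p f : ℕ) [Fact p.Prime] (hf : 1 ≤ f) (n k : ℕ) (hn : 1 ≤ n) (hk : 1 ≤ k) :
    pkRank (↥(Un p f n)) p k = f * ((n - 1) / p ^ (k - 1) - (n - 1) / p ^ k) := by
  have hp : p.Prime := Fact.out
  have hCB : (powMonoidHom (p ^ k) (α := ↥(Un p f n))).range ≤
      (powMonoidHom (p ^ (k - 1)) (α := ↥(Un p f n))).range := by
    rintro g ⟨y, rfl⟩
    refine ⟨y ^ p, ?_⟩
    show (y ^ p) ^ p ^ (k - 1) = y ^ p ^ k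
    rw [← pow_mul]
    congr 1
    rw [← pow_succ']
    congr 1
    omega
  have h1 := Subgroup.card_eq_card_quotient_mul_card_subgroup
      (((powMonoidHom (p ^ k) (α := ↥(Un p f n))).range).subgroupOf
        ((powMonoidHom (p ^ (k - 1)) (α := ↥(Un p f n))).range))
  have h2 : Nat.card (((powMonoidHom (p ^ k) (α := ↥(Un p f n))).range).subgroupOf
        ((powMonoidHom (p ^ (k - 1)) (α := ↥(Un p f n))).range))
      = Nat.card ((powMonoidHom (p ^ k) (α := ↥(Un p f n))).range) :=
    Nat.card_congr (Subgroup.subgroupOfEquivOfLe hCB).toEquiv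
  rw [h2, Stmt1Aux.card_range p f n hf hn (k - 1), Stmt1Aux.card_range p f n hf hn k] at h1
  have hba : (n - 1) / p ^ k ≤ (n - 1) / p ^ (k - 1) :=
    Nat.div_le_div_left (pow_le_pow_right₀ hp.one_le (by omega)) (pow_pos hp.pos _)
  have hpos : 0 < (p ^ f) ^ ((n - 1) / p ^ k) := pow_pos (pow_pos hp.pos f) _
  have hQ : Nat.card (↥((powMonoidHom (p ^ (k - 1)) (α := ↥(Un p f n))).range) ⧸
        (((powMonoidHom (p ^ k) (α := ↥(Un p f n))).range).subgroupOf
          ((powMonoidHom (p ^ (k - 1)) (α := ↥(Un p f n))).range)))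
      = (p ^ f) ^ ((n - 1) / p ^ (k - 1) - (n - 1) / p ^ k) := by
    apply Nat.eq_of_mul_eq_mul_right hpos
    rw [← h1, ← pow_add]
    congr 1
    omega
  rw [pkRank, hQ, ← pow_mul, Nat.log_pow hp.one_lt]
end

section
/- Let ℓ be a prime and let a ≥ d ≥ b ≥ 0 be integers with a > b. Let G = C_{ℓ^a} × C_{ℓ^b} and A = C_{ℓ^a} × C_{ℓ^d}. Then the number of subgroups of A isomorphic to G equals ℓ^{d−b} if a > d, and equals (ℓ+1)·ℓ^{d−b−1} if a = d. Moreover, if a = b or d = 0 (so that G = A), this number of subgroups equals 1. -/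
open scoped Classical

open scoped Classical

section Helpers

variable {ℓ a b d : ℕ}

lemma pow_mul_cast_eq_iff (hℓ : ℓ.Prime) (hba : b ≤ a) (u v : ℕ) :
    ((ℓ ^ b * u : ℕ) : ZMod (ℓ ^ a)) = ((ℓ ^ b * v : ℕ) : ZMod (ℓ ^ a)) ↔
      ((u : ZMod (ℓ ^ (a - b))) = v) := by
  rw [ZMod.natCast_eq_natCast_iff, ZMod.natCast_eq_natCast_iff,
    show ℓ ^ a = ℓ ^ b * ℓ ^ (a - b) by rw [← pow_add, Nat.add_sub_cancel' hba]]
  exact Nat.ModEq.mul_left_cancel_iff' (pow_ne_zero _ hℓ.ne_zero)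

lemma nonunit_pow_mul (hℓ : ℓ.Prime) (ha : 1 ≤ a) (x : ZMod (ℓ ^ a)) (hx : ¬ IsUnit x) :
    (ℓ : ZMod (ℓ ^ a)) ^ (a - 1) * x = 0 := by
  haveI : NeZero (ℓ ^ a) := ⟨pow_ne_zero _ hℓ.ne_zero⟩
  have hd : ℓ ∣ x.val := by
    by_contra hdd
    refine hx ?_
    have : IsUnit ((x.val : ℕ) : ZMod (ℓ ^ a)) := by
      rw [ZMod.isUnit_iff_coprime]
      exact Nat.Coprime.pow_right _ ((Nat.Prime.coprime_iff_not_dvd hℓ).mpr hdd).symm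
    rwa [ZMod.natCast_val, ZMod.cast_id] at this
  obtain ⟨k, hk⟩ := hd
  have hx' : x = ((ℓ * k : ℕ) : ZMod (ℓ ^ a)) := by
    rw [← hk, ZMod.natCast_val, ZMod.cast_id]
  rw [hx']
  have : ((ℓ : ZMod (ℓ ^ a)) ^ (a - 1)) = ((ℓ ^ (a - 1) : ℕ) : ZMod (ℓ ^ a)) := by push_cast; ring
  rw [this, ← Nat.cast_mul, show ℓ ^ (a - 1) * (ℓ * k) = ℓ ^ a * k by
    rw [← mul_assoc, ← pow_succ, Nat.sub_add_cancel ha]]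
  simp [ZMod.natCast_self, Nat.cast_mul]

lemma my_eq_of_le_of_card {M : Type*} [AddGroup M] [Finite M] (H K : AddSubgroup M)
    (h : H ≤ K) (hc : Nat.card K ≤ Nat.card H) : H = K := by
  apply SetLike.coe_injective
  exact Set.eq_of_subset_of_ncard_le h
    (by rwa [← Nat.card_coe_set_eq, ← Nat.card_coe_set_eq]) (Set.toFinite _)

end Helpers

section HsubDef

variable (ℓ a b d : ℕ)

/-- The subgroup `{(x,y) : ℓ^b y = ℓ^b c x}` of `Z/ℓ^a × Z/ℓ^d`. -/
def Hsub (hda : d ≤ a) (c : ZMod (ℓ ^ d)) : AddSubgroup (ZMod (ℓ ^ a) × ZMod (ℓ ^ d)) where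
  carrier := {p | (ℓ : ZMod (ℓ ^ d)) ^ b * p.2 =
    (ℓ : ZMod (ℓ ^ d)) ^ b * c * ZMod.castHom (pow_dvd_pow ℓ hda) (ZMod (ℓ ^ d)) p.1}
  zero_mem' := by simp
  add_mem' := by
    intro p q hp hq
    simp only [Set.mem_setOf_eq, Prod.fst_add, Prod.snd_add, map_add, mul_add] at *
    rw [hp, hq]
  neg_mem' := by
    intro p hp
    simp only [Set.mem_setOf_eq, Prod.fst_neg, Prod.snd_neg, map_neg, mul_neg] at *
    rw [hp]

lemma mem_Hsub (hda : d ≤ a) (c : ZMod (ℓ ^ d)) (p : ZMod (ℓ ^ a) × ZMod (ℓ ^ d)) :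
    p ∈ Hsub ℓ a b d hda c ↔ (ℓ : ZMod (ℓ ^ d)) ^ b * p.2 =
      (ℓ : ZMod (ℓ ^ d)) ^ b * c * ZMod.castHom (pow_dvd_pow ℓ hda) (ZMod (ℓ ^ d)) p.1 :=
  Iff.rfl

lemma Hsub_congr (hda : d ≤ a) (c c' : ZMod (ℓ ^ d))
    (h : (ℓ : ZMod (ℓ ^ d)) ^ b * c = (ℓ : ZMod (ℓ ^ d)) ^ b * c') :
    Hsub ℓ a b d hda c = Hsub ℓ a b d hda c' := by
  have hx : ∀ X, (ℓ : ZMod (ℓ ^ d)) ^ b * c * X = (ℓ : ZMod (ℓ ^ d)) ^ b * c' * X :=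
    fun X => by rw [h]
  ext p
  rw [mem_Hsub, mem_Hsub, hx]

variable {ℓ a b d}

lemma jaux (hbd : b ≤ d) (N : ℕ) :
    (ℓ : ZMod (ℓ ^ d)) ^ (d - b) * ((N % ℓ ^ b : ℕ) : ZMod (ℓ ^ d)) =
      (ℓ : ZMod (ℓ ^ d)) ^ (d - b) * (N : ZMod (ℓ ^ d)) := by
  have h0 : (ℓ : ZMod (ℓ ^ d)) ^ (d - b) * (ℓ : ZMod (ℓ ^ d)) ^ b = 0 := by
    rw [← pow_add, Nat.sub_add_cancel hbd]
    exact_mod_cast ZMod.natCast_self (ℓ ^ d)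
  conv_rhs => rw [← Nat.mod_add_div N (ℓ ^ b)]
  push_cast
  linear_combination -((N / ℓ ^ b : ℕ) : ZMod (ℓ ^ d)) * h0

/-- The additive map `Z/ℓ^b → Z/ℓ^d`, `t ↦ ℓ^(d-b)·t`. -/
def jmap (hℓ : ℓ.Prime) (hbd : b ≤ d) : ZMod (ℓ ^ b) →+ ZMod (ℓ ^ d) where
  toFun t := (ℓ : ZMod (ℓ ^ d)) ^ (d - b) * (t.val : ZMod (ℓ ^ d))
  map_zero' := by
    haveI : NeZero (ℓ ^ b) := ⟨pow_ne_zero _ hℓ.ne_zero⟩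
    simp
  map_add' := by
    haveI : NeZero (ℓ ^ b) := ⟨pow_ne_zero _ hℓ.ne_zero⟩
    intro t s
    show (ℓ : ZMod (ℓ ^ d)) ^ (d - b) * (((t + s).val : ℕ) : ZMod (ℓ ^ d)) = _ + _
    rw [ZMod.val_add, jaux hbd]
    push_cast
    ring

lemma jmap_apply (hℓ : ℓ.Prime) (hbd : b ≤ d) (t : ZMod (ℓ ^ b)) :
    jmap hℓ hbd t = (ℓ : ZMod (ℓ ^ d)) ^ (d - b) * (t.val : ZMod (ℓ ^ d)) := rfl

lemma jmap_natCast (hℓ : ℓ.Prime) (hbd : b ≤ d) (k : ℕ) :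
    jmap hℓ hbd (k : ZMod (ℓ ^ b)) = (ℓ : ZMod (ℓ ^ d)) ^ (d - b) * (k : ZMod (ℓ ^ d)) := by
  haveI : NeZero (ℓ ^ b) := ⟨pow_ne_zero _ hℓ.ne_zero⟩
  rw [jmap_apply, ZMod.val_natCast, jaux hbd]

lemma ker_pow_mul (hℓ : ℓ.Prime) (hbd : b ≤ d) (z : ZMod (ℓ ^ d))
    (hz : (ℓ : ZMod (ℓ ^ d)) ^ b * z = 0) :
    ∃ t : ZMod (ℓ ^ b), jmap hℓ hbd t = z := by
  haveI : NeZero (ℓ ^ d) := ⟨pow_ne_zero _ hℓ.ne_zero⟩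
  have hz' : ((ℓ ^ b * z.val : ℕ) : ZMod (ℓ ^ d)) = 0 := by
    push_cast
    rw [ZMod.natCast_val, ZMod.cast_id]
    exact hz
  rw [ZMod.natCast_eq_zero_iff] at hz'
  have hdvd : ℓ ^ (d - b) ∣ z.val := by
    have h2 : ℓ ^ b * ℓ ^ (d - b) ∣ ℓ ^ b * z.val := by
      rwa [← pow_add, Nat.add_sub_cancel' hbd]
    exact (mul_dvd_mul_iff_left (a := ℓ ^ b) (pow_ne_zero _ hℓ.ne_zero)).mp h2
  obtain ⟨k, hk⟩ := hdvd
  refine ⟨(k : ZMod (ℓ ^ b)), ?_⟩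
  rw [jmap_natCast]
  have : (ℓ : ZMod (ℓ ^ d)) ^ (d - b) * (k : ZMod (ℓ ^ d))
      = ((ℓ ^ (d - b) * k : ℕ) : ZMod (ℓ ^ d)) := by push_cast; ring
  rw [this, ← hk, ZMod.natCast_val, ZMod.cast_id]

lemma jmap_eq_zero (hℓ : ℓ.Prime) (hbd : b ≤ d) (t : ZMod (ℓ ^ b))
    (ht : jmap hℓ hbd t = 0) : t = 0 := by
  haveI : NeZero (ℓ ^ d) := ⟨pow_ne_zero _ hℓ.ne_zero⟩
  haveI : NeZero (ℓ ^ b) := ⟨pow_ne_zero _ hℓ.ne_zero⟩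
  rw [jmap_apply] at ht
  have ht' : ((ℓ ^ (d - b) * t.val : ℕ) : ZMod (ℓ ^ d)) = 0 := by
    push_cast
    linear_combination ht
  rw [ZMod.natCast_eq_zero_iff] at ht'
  have h2 : ℓ ^ (d - b) * ℓ ^ b ∣ ℓ ^ (d - b) * t.val := by
    rwa [← pow_add, Nat.sub_add_cancel hbd]
  have h3 : ℓ ^ b ∣ t.val :=
    (mul_dvd_mul_iff_left (a := ℓ ^ (d - b)) (pow_ne_zero _ hℓ.ne_zero)).mp h2
  have := (ZMod.natCast_eq_zero_iff t.val (ℓ ^ b)).mpr h3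
  rwa [ZMod.natCast_val, ZMod.cast_id] at this

end HsubDef

section Equivs
variable {ℓ a b d : ℕ}

lemma pow_pow_zero (hbd : b ≤ d) :
    (ℓ : ZMod (ℓ ^ d)) ^ b * (ℓ : ZMod (ℓ ^ d)) ^ (d - b) = 0 := by
  rw [← pow_add, Nat.add_sub_cancel' hbd]
  exact_mod_cast ZMod.natCast_self (ℓ ^ d)

lemma pow_mul_jmap_zero (hℓ : ℓ.Prime) (hbd : b ≤ d) (t : ZMod (ℓ ^ b)) :
    (ℓ : ZMod (ℓ ^ d)) ^ b * jmap hℓ hbd t = 0 := by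
  rw [jmap_apply, ← mul_assoc, pow_pow_zero hbd, zero_mul]

/-- The structure map `Z/ℓ^a × Z/ℓ^b →+ Z/ℓ^a × Z/ℓ^d`. -/
def fmap (hℓ : ℓ.Prime) (hda : d ≤ a) (hbd : b ≤ d) (c : ZMod (ℓ ^ d)) :
    ZMod (ℓ ^ a) × ZMod (ℓ ^ b) →+ ZMod (ℓ ^ a) × ZMod (ℓ ^ d) where
  toFun p := (p.1, c * ZMod.castHom (pow_dvd_pow ℓ hda) (ZMod (ℓ ^ d)) p.1 + jmap hℓ hbd p.2)
  map_zero' := by simp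
  map_add' := by
    intro p q
    have : ∀ x y : ZMod (ℓ ^ a), ZMod.castHom (pow_dvd_pow ℓ hda) (ZMod (ℓ ^ d)) (x + y)
        = ZMod.castHom (pow_dvd_pow ℓ hda) (ZMod (ℓ ^ d)) x
          + ZMod.castHom (pow_dvd_pow ℓ hda) (ZMod (ℓ ^ d)) y := fun x y => map_add _ _ _
    simp only [Prod.fst_add, Prod.snd_add, this, map_add, Prod.mk_add_mk, Prod.mk.injEq]
    constructor
    · trivial
    · ring

lemma fmap_mem (hℓ : ℓ.Prime) (hda : d ≤ a) (hbd : b ≤ d) (c : ZMod (ℓ ^ d))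
    (p : ZMod (ℓ ^ a) × ZMod (ℓ ^ b)) : fmap hℓ hda hbd c p ∈ Hsub ℓ a b d hda c := by
  rw [mem_Hsub]
  show (ℓ : ZMod (ℓ ^ d)) ^ b * (c * ZMod.castHom (pow_dvd_pow ℓ hda) (ZMod (ℓ ^ d)) p.1
      + jmap hℓ hbd p.2)
    = (ℓ : ZMod (ℓ ^ d)) ^ b * c * ZMod.castHom (pow_dvd_pow ℓ hda) (ZMod (ℓ ^ d)) p.1
  rw [mul_add, pow_mul_jmap_zero hℓ hbd, add_zero, mul_assoc]

/-- `Z/ℓ^a × Z/ℓ^b ≃+ Hsub c`. -/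
noncomputable def ecEquiv (hℓ : ℓ.Prime) (hda : d ≤ a) (hbd : b ≤ d) (c : ZMod (ℓ ^ d)) :
    (ZMod (ℓ ^ a) × ZMod (ℓ ^ b)) ≃+ ↥(Hsub ℓ a b d hda c) := by
  refine AddEquiv.ofBijective
    ((fmap hℓ hda hbd c).codRestrict (Hsub ℓ a b d hda c) (fmap_mem hℓ hda hbd c)) ⟨?_, ?_⟩
  · rw [injective_iff_map_eq_zero]
    intro p hp
    have hval : fmap hℓ hda hbd c p = 0 := congrArg Subtype.val hp
    have h1 : p.1 = 0 := congrArg Prod.fst hval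
    have h2 : c * ZMod.castHom (pow_dvd_pow ℓ hda) (ZMod (ℓ ^ d)) p.1 + jmap hℓ hbd p.2 = 0 :=
      congrArg Prod.snd hval
    rw [h1, map_zero, mul_zero, zero_add] at h2
    have h3 : p.2 = 0 := jmap_eq_zero hℓ hbd _ h2
    exact Prod.ext h1 h3
  · rintro ⟨⟨x, y⟩, hmem⟩
    rw [mem_Hsub] at hmem
    have hmem' : (ℓ : ZMod (ℓ ^ d)) ^ b * y
        = (ℓ : ZMod (ℓ ^ d)) ^ b * c * ZMod.castHom (pow_dvd_pow ℓ hda) (ZMod (ℓ ^ d)) x := hmem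
    have hz : (ℓ : ZMod (ℓ ^ d)) ^ b
        * (y - c * ZMod.castHom (pow_dvd_pow ℓ hda) (ZMod (ℓ ^ d)) x) = 0 := by
      linear_combination hmem'
    obtain ⟨t, ht⟩ := ker_pow_mul hℓ hbd _ hz
    refine ⟨(x, t), ?_⟩
    apply Subtype.ext
    show fmap hℓ hda hbd c (x, t) = (x, y)
    have : fmap hℓ hda hbd c (x, t)
        = (x, c * ZMod.castHom (pow_dvd_pow ℓ hda) (ZMod (ℓ ^ d)) x + jmap hℓ hbd t) := rfl
    rw [this, ht]
    simp only [Prod.mk.injEq]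
    exact ⟨trivial, by ring⟩

end Equivs

section OrderLemmas
variable {ℓ a b d : ℕ}

lemma order_contra (hℓ : ℓ.Prime) (ha1 : 1 ≤ a) (g : ZMod (ℓ ^ a) × ZMod (ℓ ^ d))
    (hg : addOrderOf g = ℓ ^ a)
    (h1 : (ℓ : ZMod (ℓ ^ a)) ^ (a - 1) * g.1 = 0)
    (h2 : (ℓ : ZMod (ℓ ^ d)) ^ (a - 1) * g.2 = 0) : False := by
  have hsm : (ℓ ^ (a - 1)) • g = 0 := by
    apply Prod.ext
    · show (ℓ ^ (a - 1)) • g.1 = 0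
      rw [nsmul_eq_mul]
      push_cast
      exact h1
    · show (ℓ ^ (a - 1)) • g.2 = 0
      rw [nsmul_eq_mul]
      push_cast
      exact h2
  have hdvd : addOrderOf g ∣ ℓ ^ (a - 1) := addOrderOf_dvd_of_nsmul_eq_zero hsm
  rw [hg] at hdvd
  have hle : ℓ ^ a ≤ ℓ ^ (a - 1) := Nat.le_of_dvd (pow_pos hℓ.pos _) hdvd
  have := (Nat.pow_le_pow_iff_right hℓ.one_lt).mp hle
  omega

lemma fst_isUnit (hℓ : ℓ.Prime) (ha1 : 1 ≤ a) (hdlt : d < a)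
    (g : ZMod (ℓ ^ a) × ZMod (ℓ ^ d)) (hg : addOrderOf g = ℓ ^ a) : IsUnit g.1 := by
  by_contra hu
  refine order_contra hℓ ha1 g hg (nonunit_pow_mul hℓ ha1 g.1 hu) ?_
  have h0 : ((ℓ ^ (a - 1) : ℕ) : ZMod (ℓ ^ d)) = 0 := by
    rw [ZMod.natCast_eq_zero_iff]
    exact pow_dvd_pow ℓ (by omega)
  push_cast at h0
  rw [h0, zero_mul]

lemma unit_dichotomy (hℓ : ℓ.Prime) (ha1 : 1 ≤ a)
    (g : ZMod (ℓ ^ a) × ZMod (ℓ ^ a)) (hg : addOrderOf g = ℓ ^ a) :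
    IsUnit g.1 ∨ IsUnit g.2 := by
  by_contra hu
  push_neg at hu
  exact order_contra hℓ ha1 g hg (nonunit_pow_mul hℓ ha1 g.1 hu.1)
    (nonunit_pow_mul hℓ ha1 g.2 hu.2)

lemma order_g (hℓ : ℓ.Prime) {H : AddSubgroup (ZMod (ℓ ^ a) × ZMod (ℓ ^ d))}
    (e : (ZMod (ℓ ^ a) × ZMod (ℓ ^ b)) ≃+ ↥H) :
    addOrderOf ((e (1, 0) : ↥H) : ZMod (ℓ ^ a) × ZMod (ℓ ^ d)) = ℓ ^ a := by
  haveI : NeZero (ℓ ^ a) := ⟨pow_ne_zero _ hℓ.ne_zero⟩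
  rw [AddSubgroup.addOrderOf_coe]
  have h1 : addOrderOf (e (1, 0)) = addOrderOf ((1, 0) : ZMod (ℓ ^ a) × ZMod (ℓ ^ b)) :=
    addOrderOf_injective e.toAddMonoidHom e.injective _
  rw [h1, Prod.addOrderOf]
  simp [ZMod.addOrderOf_one]

end OrderLemmas

section EqHsub
variable {ℓ a b d : ℕ}

lemma eq_Hsub (hℓ : ℓ.Prime) (hda : d ≤ a) (hbd : b ≤ d)
    (H : AddSubgroup (ZMod (ℓ ^ a) × ZMod (ℓ ^ d)))
    (e : (ZMod (ℓ ^ a) × ZMod (ℓ ^ b)) ≃+ ↥H) (c : ZMod (ℓ ^ d))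
    (hc : c * ZMod.castHom (pow_dvd_pow ℓ hda) (ZMod (ℓ ^ d))
        (((e (1, 0) : ↥H) : ZMod (ℓ ^ a) × ZMod (ℓ ^ d)).1)
      = ((e (1, 0) : ↥H) : ZMod (ℓ ^ a) × ZMod (ℓ ^ d)).2) :
    H = Hsub ℓ a b d hda c := by
  haveI : NeZero (ℓ ^ a) := ⟨pow_ne_zero _ hℓ.ne_zero⟩
  haveI : NeZero (ℓ ^ d) := ⟨pow_ne_zero _ hℓ.ne_zero⟩
  haveI : NeZero (ℓ ^ b) := ⟨pow_ne_zero _ hℓ.ne_zero⟩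
  set CAST := ZMod.castHom (pow_dvd_pow ℓ hda) (ZMod (ℓ ^ d)) with hCAST
  set g : ZMod (ℓ ^ a) × ZMod (ℓ ^ d) := ((e (1, 0) : ↥H) : ZMod (ℓ ^ a) × ZMod (ℓ ^ d))
    with hgdef
  set h : ZMod (ℓ ^ a) × ZMod (ℓ ^ d) := ((e (0, 1) : ↥H) : ZMod (ℓ ^ a) × ZMod (ℓ ^ d))
    with hhdef
  -- ℓ^b kills h
  have hh0 : (ℓ ^ b : ℕ) • ((0, 1) : ZMod (ℓ ^ a) × ZMod (ℓ ^ b)) = 0 := by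
    apply Prod.ext
    · show (ℓ ^ b : ℕ) • (0 : ZMod (ℓ ^ a)) = 0
      simp
    · show (ℓ ^ b : ℕ) • (1 : ZMod (ℓ ^ b)) = 0
      rw [nsmul_eq_mul, mul_one]
      exact_mod_cast ZMod.natCast_self (ℓ ^ b)
  have hhkill : (ℓ ^ b : ℕ) • h = 0 := by
    rw [hhdef, ← AddSubgroup.coe_nsmul, ← map_nsmul, hh0, map_zero, AddSubgroup.coe_zero]
  have e1 : (ℓ : ZMod (ℓ ^ a)) ^ b * h.1 = 0 := by
    have := congrArg Prod.fst hhkill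
    rw [Prod.smul_fst, nsmul_eq_mul] at this
    push_cast at this
    exact this
  have e2 : (ℓ : ZMod (ℓ ^ d)) ^ b * h.2 = 0 := by
    have := congrArg Prod.snd hhkill
    rw [Prod.smul_snd, nsmul_eq_mul] at this
    push_cast at this
    exact this
  have e1' : (ℓ : ZMod (ℓ ^ d)) ^ b * CAST h.1 = 0 := by
    have := congrArg CAST e1
    rw [map_mul, map_pow, map_natCast, map_zero] at this
    exact this
  have hle : H ≤ Hsub ℓ a b d hda c := by
    intro p hp
    set mn := e.symm ⟨p, hp⟩ with hmn
    have hm1 : ((mn.1.val : ℕ) : ZMod (ℓ ^ a)) = mn.1 := by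
      rw [ZMod.natCast_val, ZMod.cast_id]
    have hm2 : ((mn.2.val : ℕ) : ZMod (ℓ ^ b)) = mn.2 := by
      rw [ZMod.natCast_val, ZMod.cast_id]
    have hdec : mn = mn.1.val • ((1, 0) : ZMod (ℓ ^ a) × ZMod (ℓ ^ b))
        + mn.2.val • ((0, 1) : ZMod (ℓ ^ a) × ZMod (ℓ ^ b)) := by
      apply Prod.ext
      · show mn.1 = mn.1.val • (1 : ZMod (ℓ ^ a)) + mn.2.val • (0 : ZMod (ℓ ^ a))
        simp [nsmul_eq_mul, hm1]
      · show mn.2 = mn.1.val • (0 : ZMod (ℓ ^ b)) + mn.2.val • (1 : ZMod (ℓ ^ b))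
        simp [nsmul_eq_mul, hm2]
    have hpe : (⟨p, hp⟩ : ↥H) = mn.1.val • e (1, 0) + mn.2.val • e (0, 1) := by
      conv_lhs => rw [← e.apply_symm_apply ⟨p, hp⟩, ← hmn, hdec]
      rw [map_add, map_nsmul, map_nsmul]
    have hcoe : p = mn.1.val • g + mn.2.val • h := by
      have := congrArg Subtype.val hpe
      rw [AddSubgroup.coe_add, AddSubgroup.coe_nsmul, AddSubgroup.coe_nsmul] at this
      exact this
    have hp1 : p.1 = ((mn.1.val : ℕ) : ZMod (ℓ ^ a)) * g.1 + ((mn.2.val : ℕ) : ZMod (ℓ ^ a)) * h.1 := by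
      rw [hcoe]
      show mn.1.val • g.1 + mn.2.val • h.1 = _
      rw [nsmul_eq_mul, nsmul_eq_mul]
    have hp2 : p.2 = ((mn.1.val : ℕ) : ZMod (ℓ ^ d)) * g.2 + ((mn.2.val : ℕ) : ZMod (ℓ ^ d)) * h.2 := by
      rw [hcoe]
      show mn.1.val • g.2 + mn.2.val • h.2 = _
      rw [nsmul_eq_mul, nsmul_eq_mul]
    rw [mem_Hsub, ← hCAST, hp1, hp2, map_add, map_mul, map_mul, map_natCast, map_natCast]
    linear_combination (-(((mn.1.val : ℕ) : ZMod (ℓ ^ d))) * (ℓ : ZMod (ℓ ^ d)) ^ b) * hc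
      + ((mn.2.val : ℕ) : ZMod (ℓ ^ d)) * e2
      - ((mn.2.val : ℕ) : ZMod (ℓ ^ d)) * c * e1'
  have c1 : Nat.card ↥(Hsub ℓ a b d hda c) = Nat.card (ZMod (ℓ ^ a) × ZMod (ℓ ^ b)) :=
    (Nat.card_congr (ecEquiv hℓ hda hbd c).toEquiv).symm
  have c2 : Nat.card ↥H = Nat.card (ZMod (ℓ ^ a) × ZMod (ℓ ^ b)) :=
    (Nat.card_congr e.toEquiv).symm
  exact my_eq_of_le_of_card H _ hle (by rw [c1, c2])

end EqHsub

section Count1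
variable {ℓ a b d : ℕ}

lemma one_c_mem (hda : d ≤ a) (c : ZMod (ℓ ^ d)) :
    ((1 : ZMod (ℓ ^ a)), c) ∈ Hsub ℓ a b d hda c := by
  rw [mem_Hsub, map_one, mul_one]

lemma count1 (hℓ : ℓ.Prime) (hbd : b ≤ d) (hda : d < a) :
    Nat.card {H : AddSubgroup (ZMod (ℓ ^ a) × ZMod (ℓ ^ d)) //
      Nonempty (↥H ≃+ ZMod (ℓ ^ a) × ZMod (ℓ ^ b))} = ℓ ^ (d - b) := by
  haveI : NeZero (ℓ ^ a) := ⟨pow_ne_zero _ hℓ.ne_zero⟩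
  haveI : NeZero (ℓ ^ d) := ⟨pow_ne_zero _ hℓ.ne_zero⟩
  haveI : NeZero (ℓ ^ (d - b)) := ⟨pow_ne_zero _ hℓ.ne_zero⟩
  set F : ZMod (ℓ ^ (d - b)) → {H : AddSubgroup (ZMod (ℓ ^ a) × ZMod (ℓ ^ d)) //
      Nonempty (↥H ≃+ ZMod (ℓ ^ a) × ZMod (ℓ ^ b))} := fun r =>
    ⟨Hsub ℓ a b d hda.le ((r.val : ℕ) : ZMod (ℓ ^ d)),
      ⟨(ecEquiv hℓ hda.le hbd _).symm⟩⟩ with hF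
  have hinj : Function.Injective F := by
    intro r s hrs
    have h := congrArg Subtype.val hrs
    simp only [hF] at h
    have hmem := one_c_mem (ℓ := ℓ) (b := b) hda.le ((r.val : ℕ) : ZMod (ℓ ^ d))
    rw [h, mem_Hsub] at hmem
    simp only [map_one, mul_one] at hmem
    have hmem' : ((ℓ ^ b * r.val : ℕ) : ZMod (ℓ ^ d)) = ((ℓ ^ b * s.val : ℕ) : ZMod (ℓ ^ d)) := by
      push_cast
      exact hmem
    rw [pow_mul_cast_eq_iff hℓ hbd] at hmem'
    rwa [ZMod.natCast_val, ZMod.cast_id, ZMod.natCast_val, ZMod.cast_id] at hmem'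
  have hsurj : Function.Surjective F := by
    rintro ⟨H, ⟨e0⟩⟩
    set e := e0.symm with he
    have hg := order_g hℓ e
    set g : ZMod (ℓ ^ a) × ZMod (ℓ ^ d) := ((e (1, 0) : ↥H) : ZMod (ℓ ^ a) × ZMod (ℓ ^ d))
      with hgdef
    have hu : IsUnit g.1 := fst_isUnit hℓ (by omega) hda g hg
    have hu' : IsUnit (ZMod.castHom (pow_dvd_pow ℓ hda.le) (ZMod (ℓ ^ d)) g.1) :=
      hu.map _
    obtain ⟨u, hu2⟩ := hu'
    set c : ZMod (ℓ ^ d) := (↑u⁻¹ : ZMod (ℓ ^ d)) * g.2 with hcdef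
    have hc : c * ZMod.castHom (pow_dvd_pow ℓ hda.le) (ZMod (ℓ ^ d)) g.1 = g.2 := by
      rw [hcdef, ← hu2, mul_comm ((↑u⁻¹ : ZMod (ℓ ^ d))) g.2, mul_assoc, Units.inv_mul, mul_one]
    have hH : H = Hsub ℓ a b d hda.le c := eq_Hsub hℓ hda.le hbd H e c hc
    refine ⟨((c.val : ℕ) : ZMod (ℓ ^ (d - b))), ?_⟩
    apply Subtype.ext
    show Hsub ℓ a b d hda.le (((((c.val : ℕ) : ZMod (ℓ ^ (d - b))).val : ℕ)) : ZMod (ℓ ^ d)) = H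
    rw [hH]
    apply Hsub_congr
    rw [ZMod.val_natCast]
    have h1 : ((ℓ ^ b * (c.val % ℓ ^ (d - b)) : ℕ) : ZMod (ℓ ^ d))
        = ((ℓ ^ b * c.val : ℕ) : ZMod (ℓ ^ d)) := by
      rw [pow_mul_cast_eq_iff hℓ hbd]
      exact ZMod.natCast_mod c.val (ℓ ^ (d - b))
    push_cast at h1
    rwa [ZMod.natCast_val, ZMod.cast_id] at h1
  rw [Nat.card_congr (Equiv.ofBijective F ⟨hinj, hsurj⟩).symm, Nat.card_zmod]

end Count1

section Count2
variable {ℓ a b : ℕ}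

lemma natval_inj {m : ℕ} [NeZero m] {r s : ZMod m}
    (h : ((r.val : ℕ) : ZMod m) = ((s.val : ℕ) : ZMod m)) : r = s := by
  rwa [ZMod.natCast_val, ZMod.cast_id, ZMod.natCast_val, ZMod.cast_id] at h

lemma count2 (hℓ : ℓ.Prime) (hba : b < a) :
    Nat.card {H : AddSubgroup (ZMod (ℓ ^ a) × ZMod (ℓ ^ a)) //
      Nonempty (↥H ≃+ ZMod (ℓ ^ a) × ZMod (ℓ ^ b))} = ℓ ^ (a - b) + ℓ ^ (a - b - 1) := by
  haveI : NeZero (ℓ ^ a) := ⟨pow_ne_zero _ hℓ.ne_zero⟩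
  haveI : NeZero (ℓ ^ (a - b)) := ⟨pow_ne_zero _ hℓ.ne_zero⟩
  haveI : NeZero (ℓ ^ (a - b - 1)) := ⟨pow_ne_zero _ hℓ.ne_zero⟩
  haveI : Fact (1 < ℓ) := ⟨hℓ.one_lt⟩
  have hb1a : b + 1 ≤ a := hba
  set σ : (ZMod (ℓ ^ a) × ZMod (ℓ ^ a)) ≃+ (ZMod (ℓ ^ a) × ZMod (ℓ ^ a)) :=
    AddEquiv.prodComm with hσ
  have hCASTid : ∀ x : ZMod (ℓ ^ a),
      ZMod.castHom (pow_dvd_pow ℓ (le_refl a)) (ZMod (ℓ ^ a)) x = x := fun x => by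
    rw [ZMod.castHom_apply, ZMod.cast_id]
  have hσσ : ∀ K : AddSubgroup (ZMod (ℓ ^ a) × ZMod (ℓ ^ a)),
      AddSubgroup.map σ.toAddMonoidHom (AddSubgroup.map σ.toAddMonoidHom K) = K := by
    intro K
    rw [AddSubgroup.map_map]
    have hid : σ.toAddMonoidHom.comp σ.toAddMonoidHom
        = AddMonoidHom.id (ZMod (ℓ ^ a) × ZMod (ℓ ^ a)) := by
      apply DFunLike.ext
      intro p
      rfl
    rw [hid, AddSubgroup.map_id]
  have memH' : ∀ (c : ZMod (ℓ ^ a)) (p : ZMod (ℓ ^ a) × ZMod (ℓ ^ a)),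
      p ∈ AddSubgroup.map σ.toAddMonoidHom (Hsub ℓ a b a (le_refl a) c)
        ↔ (p.2, p.1) ∈ Hsub ℓ a b a (le_refl a) c := by
    intro c p
    rw [AddSubgroup.mem_map_equiv]
    rfl
  set F : (ZMod (ℓ ^ (a - b)) ⊕ ZMod (ℓ ^ (a - b - 1))) →
      {H : AddSubgroup (ZMod (ℓ ^ a) × ZMod (ℓ ^ a)) //
        Nonempty (↥H ≃+ ZMod (ℓ ^ a) × ZMod (ℓ ^ b))} := fun x =>
    match x with
    | Sum.inl r => ⟨Hsub ℓ a b a (le_refl a) ((r.val : ℕ) : ZMod (ℓ ^ a)),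
        ⟨(ecEquiv hℓ (le_refl a) hba.le _).symm⟩⟩
    | Sum.inr s => ⟨AddSubgroup.map σ.toAddMonoidHom
        (Hsub ℓ a b a (le_refl a) (((ℓ * s.val : ℕ)) : ZMod (ℓ ^ a))),
        ⟨((AddSubgroup.equivMapOfInjective _ σ.toAddMonoidHom σ.injective).symm.trans
          (ecEquiv hℓ (le_refl a) hba.le _).symm)⟩⟩
    with hF
  -- a small helper for the mixed case
  have hmix : ∀ (r : ZMod (ℓ ^ (a - b))) (s : ZMod (ℓ ^ (a - b - 1))),
      Hsub ℓ a b a (le_refl a) ((r.val : ℕ) : ZMod (ℓ ^ a))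
        = AddSubgroup.map σ.toAddMonoidHom
            (Hsub ℓ a b a (le_refl a) (((ℓ * s.val : ℕ)) : ZMod (ℓ ^ a))) → False := by
    intro r s h
    have hmem := one_c_mem (ℓ := ℓ) (b := b) (le_refl a) ((r.val : ℕ) : ZMod (ℓ ^ a))
    rw [h, memH'] at hmem
    rw [mem_Hsub] at hmem
    simp only at hmem
    rw [hCASTid] at hmem
    -- hmem : ℓ^b * 1 = ℓ^b * ↑(ℓ * s.val) * ↑r.val
    have hmem' : ((ℓ ^ b * 1 : ℕ) : ZMod (ℓ ^ a)) = ((ℓ ^ b * (ℓ * s.val * r.val) : ℕ) : ZMod (ℓ ^ a)) := by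
      push_cast
      push_cast at hmem
      linear_combination hmem
    rw [pow_mul_cast_eq_iff hℓ hba.le] at hmem'
    -- hmem' : (1 : ZMod (ℓ^(a-b))) = ↑(ℓ * s.val * r.val)
    have hcast := congrArg (ZMod.castHom (dvd_pow_self ℓ (by omega : a - b ≠ 0)) (ZMod ℓ)) hmem'
    rw [map_natCast, map_natCast] at hcast
    rw [Nat.cast_one] at hcast
    have : ((ℓ * s.val * r.val : ℕ) : ZMod ℓ) = 0 := by
      push_cast
      rw [ZMod.natCast_self]
      ring
    rw [this] at hcast
    exact one_ne_zero hcast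
  have hinj : Function.Injective F := by
    rintro (r | s) (r' | s') hrs <;> have h := congrArg Subtype.val hrs <;> simp only [hF] at h
    · -- inl inl
      have hmem := one_c_mem (ℓ := ℓ) (b := b) (le_refl a) ((r.val : ℕ) : ZMod (ℓ ^ a))
      rw [h, mem_Hsub] at hmem
      rw [hCASTid] at hmem
      rw [mul_one] at hmem
      have hmem' : ((ℓ ^ b * r.val : ℕ) : ZMod (ℓ ^ a)) = ((ℓ ^ b * r'.val : ℕ) : ZMod (ℓ ^ a)) := by
        push_cast
        exact hmem
      rw [pow_mul_cast_eq_iff hℓ hba.le] at hmem'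
      exact congrArg Sum.inl (natval_inj hmem')
    · exact absurd h (fun h => hmix r s' h)
    · exact absurd h.symm (fun h => hmix r' s h)
    · -- inr inr
      have hmem := one_c_mem (ℓ := ℓ) (b := b) (le_refl a) (((ℓ * s.val : ℕ)) : ZMod (ℓ ^ a))
      have hmem2 : (((((ℓ * s.val : ℕ)) : ZMod (ℓ ^ a)), (1 : ZMod (ℓ ^ a)))
          ∈ AddSubgroup.map σ.toAddMonoidHom
            (Hsub ℓ a b a (le_refl a) (((ℓ * s.val : ℕ)) : ZMod (ℓ ^ a)))) := by
        rw [memH']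
        exact hmem
      rw [h, memH', mem_Hsub] at hmem2
      simp only at hmem2
      rw [hCASTid, mul_one] at hmem2
      have hmem' : ((ℓ ^ (b + 1) * s.val : ℕ) : ZMod (ℓ ^ a))
          = ((ℓ ^ (b + 1) * s'.val : ℕ) : ZMod (ℓ ^ a)) := by
        push_cast
        push_cast at hmem2
        linear_combination hmem2
      rw [pow_mul_cast_eq_iff hℓ hb1a] at hmem'
      have hmem'' : ((s.val : ℕ) : ZMod (ℓ ^ (a - b - 1))) = ((s'.val : ℕ) : ZMod (ℓ ^ (a - b - 1))) := hmem'
      exact congrArg Sum.inr (natval_inj hmem'')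
  have hsurj : Function.Surjective F := by
    rintro ⟨H, ⟨e0⟩⟩
    set e := e0.symm with he
    have hg := order_g hℓ e
    set g : ZMod (ℓ ^ a) × ZMod (ℓ ^ a) := ((e (1, 0) : ↥H) : ZMod (ℓ ^ a) × ZMod (ℓ ^ a))
      with hgdef
    by_cases hu1 : IsUnit g.1
    · -- first coordinate unit : H = Hsub c
      have hu' : IsUnit (ZMod.castHom (pow_dvd_pow ℓ (le_refl a)) (ZMod (ℓ ^ a)) g.1) :=
        hu1.map _
      obtain ⟨u, hu2⟩ := hu'
      set c : ZMod (ℓ ^ a) := (↑u⁻¹ : ZMod (ℓ ^ a)) * g.2 with hcdef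
      have hc : c * ZMod.castHom (pow_dvd_pow ℓ (le_refl a)) (ZMod (ℓ ^ a)) g.1 = g.2 := by
        rw [hcdef, ← hu2, mul_comm ((↑u⁻¹ : ZMod (ℓ ^ a))) g.2, mul_assoc, Units.inv_mul, mul_one]
      have hH : H = Hsub ℓ a b a (le_refl a) c := eq_Hsub hℓ (le_refl a) hba.le H e c hc
      refine ⟨Sum.inl ((c.val : ℕ) : ZMod (ℓ ^ (a - b))), ?_⟩
      apply Subtype.ext
      show Hsub ℓ a b a (le_refl a) _ = H
      rw [hH]
      apply Hsub_congr
      rw [ZMod.val_natCast]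
      have h1 : ((ℓ ^ b * (c.val % ℓ ^ (a - b)) : ℕ) : ZMod (ℓ ^ a))
          = ((ℓ ^ b * c.val : ℕ) : ZMod (ℓ ^ a)) := by
        rw [pow_mul_cast_eq_iff hℓ hba.le]
        exact ZMod.natCast_mod c.val (ℓ ^ (a - b))
      push_cast at h1
      rwa [ZMod.natCast_val, ZMod.cast_id] at h1
    · -- second coordinate unit : H = map σ (Hsub c) with c non-unit
      have hu2' : IsUnit g.2 := by
        rcases unit_dichotomy hℓ (by omega) g hg with h | h
        · exact absurd h hu1
        · exact h
      set K := AddSubgroup.map σ.toAddMonoidHom H with hK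
      set eK : (ZMod (ℓ ^ a) × ZMod (ℓ ^ b)) ≃+ ↥K :=
        e.trans (AddSubgroup.equivMapOfInjective H σ.toAddMonoidHom σ.injective) with heK
      have hgK : ((eK (1, 0) : ↥K) : ZMod (ℓ ^ a) × ZMod (ℓ ^ a)) = (g.2, g.1) := by
        show ((AddSubgroup.equivMapOfInjective H σ.toAddMonoidHom σ.injective) (e (1, 0))
          : ZMod (ℓ ^ a) × ZMod (ℓ ^ a)) = (g.2, g.1)
        show σ.toAddMonoidHom g = (g.2, g.1)
        rfl
      have huK : IsUnit (ZMod.castHom (pow_dvd_pow ℓ (le_refl a)) (ZMod (ℓ ^ a))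
          ((eK (1, 0) : ↥K) : ZMod (ℓ ^ a) × ZMod (ℓ ^ a)).1) := by
        rw [hgK]
        exact hu2'.map _
      obtain ⟨u, hu2⟩ := huK
      set c : ZMod (ℓ ^ a) := (↑u⁻¹ : ZMod (ℓ ^ a))
        * ((eK (1, 0) : ↥K) : ZMod (ℓ ^ a) × ZMod (ℓ ^ a)).2 with hcdef
      have hc : c * ZMod.castHom (pow_dvd_pow ℓ (le_refl a)) (ZMod (ℓ ^ a))
          ((eK (1, 0) : ↥K) : ZMod (ℓ ^ a) × ZMod (ℓ ^ a)).1
          = ((eK (1, 0) : ↥K) : ZMod (ℓ ^ a) × ZMod (ℓ ^ a)).2 := by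
        rw [hcdef, ← hu2, mul_comm ((↑u⁻¹ : ZMod (ℓ ^ a))) _, mul_assoc, Units.inv_mul, mul_one]
      have hKH : K = Hsub ℓ a b a (le_refl a) c := eq_Hsub hℓ (le_refl a) hba.le K eK c hc
      have hHK : H = AddSubgroup.map σ.toAddMonoidHom (Hsub ℓ a b a (le_refl a) c) := by
        rw [← hKH, hK, hσσ]
      -- c is a non-unit
      have hcnu : ¬ IsUnit c := by
        intro hcu
        apply hu1
        have hg1 : g.1 = c * g.2 := by
          have h2 := hc
          rw [hgK] at h2
          rw [hCASTid] at h2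
          exact h2.symm
        rw [hg1]
        exact hcu.mul hu2'
      have hdvd : ℓ ∣ c.val := by
        by_contra hnd
        apply hcnu
        have hcop : Nat.Coprime c.val (ℓ ^ a) :=
          Nat.Coprime.pow_right _ ((Nat.Prime.coprime_iff_not_dvd hℓ).mpr hnd).symm
        have := (ZMod.isUnit_iff_coprime c.val (ℓ ^ a)).mpr hcop
        rwa [ZMod.natCast_val, ZMod.cast_id] at this
      obtain ⟨k, hk⟩ := hdvd
      refine ⟨Sum.inr ((k : ℕ) : ZMod (ℓ ^ (a - b - 1))), ?_⟩
      apply Subtype.ext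
      show AddSubgroup.map σ.toAddMonoidHom _ = H
      rw [hHK]
      apply congrArg
      apply Hsub_congr
      rw [ZMod.val_natCast]
      have hc' : c = ((ℓ * k : ℕ) : ZMod (ℓ ^ a)) := by
        rw [← hk, ZMod.natCast_val, ZMod.cast_id]
      rw [hc']
      have h1 : ((ℓ ^ (b + 1) * (k % ℓ ^ (a - b - 1)) : ℕ) : ZMod (ℓ ^ a))
          = ((ℓ ^ (b + 1) * k : ℕ) : ZMod (ℓ ^ a)) := by
        rw [pow_mul_cast_eq_iff hℓ hb1a]
        exact ZMod.natCast_mod k (ℓ ^ (a - b - 1))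
      push_cast at h1
      push_cast
      linear_combination h1
  rw [Nat.card_congr (Equiv.ofBijective F ⟨hinj, hsurj⟩).symm, Nat.card_sum, Nat.card_zmod,
    Nat.card_zmod]

end Count2

section Count3

lemma count3 {M : Type*} [AddCommGroup M] [Finite M] :
    Nat.card {H : AddSubgroup M // Nonempty (↥H ≃+ M)} = 1 := by
  have huniq : ∀ x : {H : AddSubgroup M // Nonempty (↥H ≃+ M)},
      x = ⟨⊤, ⟨AddSubgroup.topEquiv⟩⟩ := by
    rintro ⟨H, ⟨e⟩⟩
    apply Subtype.ext
    show H = ⊤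
    apply AddSubgroup.eq_top_of_card_eq
    rw [Nat.card_congr e.toEquiv]
  rw [Nat.card_eq_one_iff_unique]
  exact ⟨⟨fun x y => (huniq x).trans (huniq y).symm⟩, ⟨⟨⊤, ⟨AddSubgroup.topEquiv⟩⟩⟩⟩

end Count3

section Transfer

/-- Bridge between a subgroup of `Multiplicative A` and its additive counterpart. -/
def bridge {A : Type*} [AddCommGroup A] (H : Subgroup (Multiplicative A)) :
    Multiplicative ↥(Subgroup.toAddSubgroup' H) ≃* ↥H where
  toFun x := ⟨Multiplicative.ofAdd ((x.toAdd : ↥(Subgroup.toAddSubgroup' H)) : A), x.toAdd.2⟩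
  invFun h := Multiplicative.ofAdd
    (⟨(h : Multiplicative A).toAdd, h.2⟩ : ↥(Subgroup.toAddSubgroup' H))
  left_inv := fun x => rfl
  right_inv := fun h => rfl
  map_mul' := fun x y => rfl

lemma transfer (G A : Type*) [AddCommGroup G] [AddCommGroup A] :
    numIsoSubgroups (Multiplicative G) (Multiplicative A)
      = Nat.card {K : AddSubgroup A // Nonempty (↥K ≃+ G)} := by
  unfold numIsoSubgroups
  refine Nat.card_congr (Equiv.subtypeEquiv Subgroup.toAddSubgroup'.toEquiv fun H => ?_)
  constructor
  · rintro ⟨e⟩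
    exact ⟨MulEquiv.toAdditive ((bridge H).trans e)⟩
  · rintro ⟨f⟩
    exact ⟨(bridge H).symm.trans (MulEquiv.toAdditive.symm f)⟩

end Transfer

/-- the number of subgroups of `C_{ℓ^a} × C_{ℓ^d}` isomorphic to
`C_{ℓ^a} × C_{ℓ^b}` for `a ≥ d ≥ b`. -/
theorem stmt_16 (ℓ a b d : ℕ) (hℓ : ℓ.Prime) (hda : d ≤ a) (hbd : b ≤ d) :
    (b < a → d < a →
      numIsoSubgroups (Multiplicative (ZMod (ℓ ^ a) × ZMod (ℓ ^ b)))
        (Multiplicative (ZMod (ℓ ^ a) × ZMod (ℓ ^ d))) = ℓ ^ (d - b)) ∧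
    (b < a → a = d →
      numIsoSubgroups (Multiplicative (ZMod (ℓ ^ a) × ZMod (ℓ ^ b)))
        (Multiplicative (ZMod (ℓ ^ a) × ZMod (ℓ ^ d))) = (ℓ + 1) * ℓ ^ (d - b - 1)) ∧
    (a = b ∨ d = 0 →
      numIsoSubgroups (Multiplicative (ZMod (ℓ ^ a) × ZMod (ℓ ^ b)))
        (Multiplicative (ZMod (ℓ ^ a) × ZMod (ℓ ^ d))) = 1) := by 
  haveI : NeZero (ℓ ^ a) := ⟨pow_ne_zero _ hℓ.ne_zero⟩
  haveI : NeZero (ℓ ^ b) := ⟨pow_ne_zero _ hℓ.ne_zero⟩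
  haveI : NeZero (ℓ ^ d) := ⟨pow_ne_zero _ hℓ.ne_zero⟩
  refine ⟨fun hba hdlt => ?_, fun hba had => ?_, fun h => ?_⟩
  · rw [transfer, count1 hℓ hbd hdlt]
  · subst had
    rw [transfer, count2 hℓ hba]
    have h2 : ℓ ^ (a - b) = ℓ * ℓ ^ (a - b - 1) := by
      rw [← pow_succ']
      congr 1
      omega
    rw [h2]
    ring
  · have hdb : d = b := by rcases h with h1 | h1 <;> omega
    subst hdb
    rw [transfer, count3]
end
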